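/- Let k be a perfect field of prime characteristic p, S = k[[x_1,…,x_n]], q = p^e with e ≥ 1, and z = (x_1·x_2⋯x_n)^{q−1}. Let F_1, …, F_m be nonempty subsets of {1,…,n} that are pairwise incomparable under inclusion (the facets of a simplicial complex Δ), and let I = ⋂_{j=1}^m P_{F_j^c} be the associated Stanley–Reisner ideal, where F^c = {1,…,n} \ F and P_A = (x_i : i ∈ A). Set x_F = ∏_{i∈F} x_i and J_0 = I + (x_{F_1}, …, x_{F_m}). Then: (1) z·J_0 ⊆ J_0^{[q]}; (2) J_0 is not contained in P_{F_j^c} for any j; and (3) for every ideal J of S with I ⊆ J, z·J ⊆ J^{[q]}, and J not contained in any P_{F_j^c}, one has J_0 ⊆ J. Consequently, the test ideal τ(R,φ) of R = S/I with respect to the map φ induced by z is the ideal of R generated by the images of the facet monomials x_{F_1}, …, x_{F_m}. -/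

import Mathlib

/-- The `q`-th Frobenius power `I^{[q]}` of an ideal `I`: the ideal generated by the
`q`-th powers of the elements of `I`. -/
def frobeniusPower {R : Type*} [CommRing R] (I : Ideal R) (q : ℕ) : Ideal R :=
  Ideal.span ((fun a => a ^ q) '' (I : Set R))

/-- The prime ideal of `k[[x₁,…,xₙ]]` generated by the variables `xᵢ`, `i ∈ A`. -/
noncomputable def varIdeal (k : Type*) [Field k] {n : ℕ} (A : Finset (Fin n)) :
    Ideal (MvPowerSeries (Fin n) k) :=
  Ideal.span ((fun i => (MvPowerSeries.X i : MvPowerSeries (Fin n) k)) '' (A : Set (Fin n)))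

open MvPowerSeries

namespace SR

variable {k : Type*} [Field k] {n : ℕ}

/-- Build an exponent vector from a function. -/
noncomputable def expF {n : ℕ} (g : Fin n → ℕ) : Fin n →₀ ℕ := Finsupp.equivFunOnFinite.symm g

@[simp] lemma expF_apply {n : ℕ} (g : Fin n → ℕ) (i : Fin n) : expF g i = g i := rfl

/-- Build a power series from a coefficient function. -/
noncomputable def mkS {k : Type*} [Field k] {n : ℕ} (f : (Fin n →₀ ℕ) → k) : MvPowerSeries (Fin n) k := f

@[simp] lemma coeff_mkS (f : (Fin n →₀ ℕ) → k) (d : Fin n →₀ ℕ) :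
    MvPowerSeries.coeff d (mkS f) = f d := rfl

lemma monomial_one_pow (d : Fin n →₀ ℕ) (r : ℕ) :
    (monomial d (1 : k)) ^ r = monomial (r • d) 1 := by
  induction r with
  | zero => simp [MvPowerSeries.monomial_zero_one]
  | succ r ih =>
    rw [pow_succ, ih, monomial_mul_monomial, one_mul, add_smul, one_smul]

/-- The indicator exponent vector of a finite set. -/
noncomputable def indF {n : ℕ} (B : Finset (Fin n)) : Fin n →₀ ℕ := expF (fun i => if i ∈ B then 1 else 0)

lemma prod_X_eq_monomial (B : Finset (Fin n)) :
    (∏ i ∈ B, (X i : MvPowerSeries (Fin n) k)) = monomial (indF B) 1 := by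
  classical
  induction B using Finset.induction with
  | empty =>
    simp only [Finset.prod_empty]
    have : indF (∅ : Finset (Fin n)) = 0 := by ext i; simp [indF]
    rw [this, MvPowerSeries.monomial_zero_one]
  | insert _ _ hx ih =>
    rename_i a s
    have hd : Finsupp.single a 1 + indF s = indF (insert a s) := by
      ext i
      simp only [Finsupp.add_apply, Finsupp.single_apply, indF, expF_apply, Finset.mem_insert]
      by_cases h : i = a
      · subst h; simp [hx]
      · simp [h, Ne.symm h]
    rw [Finset.prod_insert hx, ih, MvPowerSeries.X, monomial_mul_monomial, one_mul, hd]

/-- The selected (least) index of `A` where `d` is nonzero. -/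
def isSel {n : ℕ} (A : Finset (Fin n)) (d : Fin n →₀ ℕ) (i : Fin n) : Prop :=
  i ∈ A.filter (fun j => d j ≠ 0) ∧ ∀ j ∈ A.filter (fun j => d j ≠ 0), i ≤ j

instance {n : ℕ} (A : Finset (Fin n)) (d : Fin n →₀ ℕ) (i : Fin n) :
    Decidable (isSel A d i) := by unfold isSel; exact instDecidableAnd

lemma isSel_unique {A : Finset (Fin n)} {d : Fin n →₀ ℕ} {i j : Fin n}
    (h1 : isSel A d i) (h2 : isSel A d j) : i = j :=
  le_antisymm (h1.2 j h2.1) (h2.2 i h1.1)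

lemma isSel_exists {A : Finset (Fin n)} {d : Fin n →₀ ℕ}
    (h : ∃ i ∈ A, d i ≠ 0) : ∃ i, isSel A d i := by
  obtain ⟨i, hiA, hid⟩ := h
  have hne : (A.filter (fun j => d j ≠ 0)).Nonempty := ⟨i, Finset.mem_filter.mpr ⟨hiA, hid⟩⟩
  exact ⟨_, Finset.min'_mem _ hne, fun j hj => Finset.min'_le _ j hj⟩

lemma isSel_spec {A : Finset (Fin n)} {d : Fin n →₀ ℕ} {i : Fin n}
    (h : isSel A d i) : i ∈ A ∧ d i ≠ 0 := by
  have := Finset.mem_filter.mp h.1; exact this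

lemma mem_varIdeal_of_forall {A : Finset (Fin n)} {f : MvPowerSeries (Fin n) k}
    (h : ∀ d : Fin n →₀ ℕ, MvPowerSeries.coeff d f ≠ 0 → ∃ i ∈ A, d i ≠ 0) :
    f ∈ varIdeal k A := by
  classical
  set g : Fin n → MvPowerSeries (Fin n) k := fun i =>
    mkS (fun d' => if isSel A (d' + Finsupp.single i 1) i
      then MvPowerSeries.coeff (d' + Finsupp.single i 1) f else 0) with hg
  have hf : f = ∑ i ∈ A, g i * X i := by
    ext d
    rw [map_sum]
    have hterm : ∀ i ∈ A, MvPowerSeries.coeff d (g i * X i)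
        = if isSel A d i then MvPowerSeries.coeff d f else 0 := by
      intro i _
      rw [MvPowerSeries.X, coeff_mul_monomial]
      by_cases hle : Finsupp.single i 1 ≤ d
      · have hadd : (d - Finsupp.single i 1) + Finsupp.single i 1 = d := tsub_add_cancel_of_le hle
        rw [if_pos hle, hg]
        simp only [coeff_mkS, hadd, mul_one]
      · rw [if_neg hle, if_neg]
        intro hs
        exact hle (Finsupp.single_le_iff.mpr (Nat.one_le_iff_ne_zero.mpr (isSel_spec hs).2))
    rw [Finset.sum_congr rfl hterm]
    by_cases hex : ∃ i ∈ A, d i ≠ 0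
    · obtain ⟨i0, hsel⟩ := isSel_exists hex
      rw [Finset.sum_eq_single i0]
      · rw [if_pos hsel]
      · intro j _ hne
        rw [if_neg (fun hs => hne (isSel_unique hs hsel))]
      · intro h0; exact absurd (isSel_spec hsel).1 h0
    · have h0 : MvPowerSeries.coeff d f = 0 := by
        by_contra hc; exact hex (h d hc)
      rw [h0, Finset.sum_eq_zero]
      intro i _
      rw [if_neg]
      intro hs
      exact hex ⟨i, (isSel_spec hs).1, (isSel_spec hs).2⟩
  rw [hf]
  exact Ideal.sum_mem _ fun i hi =>
    Ideal.mul_mem_left _ (g i) (Ideal.subset_span ⟨i, hi, rfl⟩)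

lemma forall_of_mem_varIdeal {A : Finset (Fin n)} {f : MvPowerSeries (Fin n) k}
    (hf : f ∈ varIdeal k A) :
    ∀ d : Fin n →₀ ℕ, MvPowerSeries.coeff d f ≠ 0 → ∃ i ∈ A, d i ≠ 0 := by
  classical
  refine Submodule.span_induction ?_ ?_ ?_ ?_ hf
  · rintro x ⟨i, hiA, rfl⟩ d hd
    rw [MvPowerSeries.coeff_X] at hd
    split_ifs at hd with hdi
    · exact ⟨i, hiA, by simp [hdi]⟩
    · exact absurd rfl hd
  · intro d hd; simp at hd
  · intro x y _ _ hx hy d hd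
    rw [map_add] at hd
    by_cases h1 : MvPowerSeries.coeff d x ≠ 0
    · exact hx d h1
    · push_neg at h1
      exact hy d (by rwa [h1, zero_add] at hd)
  · intro a x _ hx d hd
    rw [smul_eq_mul, MvPowerSeries.coeff_mul] at hd
    obtain ⟨pr, hpr, hne⟩ := Finset.exists_ne_zero_of_sum_ne_zero hd
    rw [Finset.HasAntidiagonal.mem_antidiagonal] at hpr
    obtain ⟨i, hiA, hi⟩ := hx pr.2 (right_ne_zero_of_mul hne)
    refine ⟨i, hiA, ?_⟩
    have : d i = pr.1 i + pr.2 i := by rw [← hpr]; simp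
    omega

lemma smul_exp_cancel {q : ℕ} (hq : 0 < q) {a b : Fin n →₀ ℕ}
    (h : q • a = q • b) : a = b := by
  ext i
  have h1 : (q • a) i = (q • b) i := by rw [h]
  simp only [Finsupp.smul_apply, smul_eq_mul] at h1
  exact Nat.eq_of_mul_eq_mul_left hq h1

lemma le_smul_self {q : ℕ} (hq : 0 < q) (a : Fin n →₀ ℕ) : a ≤ q • a := by
  rw [Finsupp.le_def]
  intro i
  simp only [Finsupp.smul_apply, smul_eq_mul]
  exact Nat.le_mul_of_pos_left _ hq

lemma charP_S (p : ℕ) [CharP k p] : CharP (MvPowerSeries (Fin n) k) p := by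
  have hinj : Function.Injective (MvPowerSeries.C (σ := Fin n) (R := k)) := by
    intro a b h
    have := congrArg (MvPowerSeries.constantCoeff (σ := Fin n) (R := k)) h
    simpa using this
  exact charP_of_injective_ringHom hinj p

lemma coeff_mul_congr {f f' g g' : MvPowerSeries (Fin n) k} {E : Fin n →₀ ℕ}
    (hf : ∀ d ≤ E, MvPowerSeries.coeff d f = MvPowerSeries.coeff d f')
    (hg : ∀ d ≤ E, MvPowerSeries.coeff d g = MvPowerSeries.coeff d g') :
    ∀ d ≤ E, MvPowerSeries.coeff d (f * g) = MvPowerSeries.coeff d (f' * g') := by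
  classical
  intro d hd
  rw [MvPowerSeries.coeff_mul, MvPowerSeries.coeff_mul]
  refine Finset.sum_congr rfl fun pr hpr => ?_
  rw [Finset.HasAntidiagonal.mem_antidiagonal] at hpr
  have h1 : pr.1 ≤ E := le_trans (hpr ▸ le_self_add) hd
  have h2 : pr.2 ≤ E := le_trans (hpr ▸ le_add_self) hd
  rw [hf pr.1 h1, hg pr.2 h2]

lemma coeff_pow_congr (r : ℕ) {f f' : MvPowerSeries (Fin n) k} {E : Fin n →₀ ℕ}
    (hf : ∀ d ≤ E, MvPowerSeries.coeff d f = MvPowerSeries.coeff d f') :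
    ∀ d ≤ E, MvPowerSeries.coeff d (f ^ r) = MvPowerSeries.coeff d (f' ^ r) := by
  induction r with
  | zero => intro d _; rfl
  | succ r ih =>
    intro d hd
    rw [pow_succ, pow_succ]
    exact coeff_mul_congr ih hf d hd

lemma monomial_pow_gen (d : Fin n →₀ ℕ) (a : k) (r : ℕ) :
    (monomial d a) ^ r = monomial (r • d) (a ^ r) := by
  induction r with
  | zero => simp [MvPowerSeries.monomial_zero_one]
  | succ r ih =>
    rw [pow_succ, ih, monomial_mul_monomial, pow_succ, add_smul, one_smul]

section CharPpow

variable {p e q : ℕ} [Fact p.Prime] [CharP k p]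

lemma coeff_pow_q (hq : q = p ^ e) (f : MvPowerSeries (Fin n) k) (E : Fin n →₀ ℕ) :
    MvPowerSeries.coeff E (f ^ q) =
      ∑ d ∈ Finset.Iic E, (if E = q • d then (MvPowerSeries.coeff d f) ^ q else 0) := by
  classical
  haveI : CharP (MvPowerSeries (Fin n) k) p := charP_S p
  haveI : ExpChar (MvPowerSeries (Fin n) k) p := ExpChar.prime Fact.out
  set g : MvPowerSeries (Fin n) k :=
    ∑ d ∈ Finset.Iic E, monomial d (MvPowerSeries.coeff d f) with hgdef
  have hagree : ∀ d ≤ E, MvPowerSeries.coeff d f = MvPowerSeries.coeff d g := by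
    intro d hd
    rw [hgdef, map_sum]
    rw [Finset.sum_congr rfl (fun d' _ => MvPowerSeries.coeff_monomial d d' _),
      Finset.sum_ite_eq, if_pos (Finset.mem_Iic.mpr hd)]
  have h1 : MvPowerSeries.coeff E (f ^ q) = MvPowerSeries.coeff E (g ^ q) :=
    coeff_pow_congr q hagree E le_rfl
  rw [h1, hgdef, hq, sum_pow_char_pow, map_sum]
  refine Finset.sum_congr rfl fun d _ => ?_
  rw [monomial_pow_gen, MvPowerSeries.coeff_monomial, ← hq]

lemma coeff_pow_q_smul (hq : q = p ^ e) (f : MvPowerSeries (Fin n) k) (D : Fin n →₀ ℕ) :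
    MvPowerSeries.coeff (q • D) (f ^ q) = (MvPowerSeries.coeff D f) ^ q := by
  classical
  have hq0 : 0 < q := hq ▸ Nat.pow_pos (n := e) (Fact.out (p := p.Prime)).pos
  rw [coeff_pow_q hq]
  have : ∀ d ∈ Finset.Iic (q • D),
      (if q • D = q • d then (MvPowerSeries.coeff d f) ^ q else 0)
        = (if D = d then (MvPowerSeries.coeff d f) ^ q else 0) := by
    intro d _
    congr 1
    by_cases h : D = d
    · simp [h]
    · simp only [eq_iff_iff]
      constructor
      · intro hs; exact absurd (smul_exp_cancel hq0 hs) h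
      · intro hs; exact absurd hs h
  rw [Finset.sum_congr rfl this, Finset.sum_ite_eq,
    if_pos (Finset.mem_Iic.mpr (le_smul_self hq0 D))]

lemma coeff_pow_q_of_not (hq : q = p ^ e) (f : MvPowerSeries (Fin n) k) (E : Fin n →₀ ℕ)
    (hE : ¬ ∃ D, E = q • D) : MvPowerSeries.coeff E (f ^ q) = 0 := by
  classical
  rw [coeff_pow_q hq]
  refine Finset.sum_eq_zero fun d _ => ?_
  rw [if_neg (fun h => hE ⟨d, h⟩)]

end CharPpow

section Phi

variable {p e q : ℕ} [Fact p.Prime] [CharP k p] [PerfectRing k p]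

/-- The `q = p^e`-th root map on the perfect field `k`. -/
noncomputable def rt (p e : ℕ) [Fact p.Prime] [CharP k p] [PerfectRing k p] : k ≃+* k :=
  (iterateFrobeniusEquiv k p e).symm

lemma rt_pow (hq : q = p ^ e) (x : k) : (rt p e x) ^ q = x := by
  have := (iterateFrobeniusEquiv k p e).apply_symm_apply x
  rw [iterateFrobeniusEquiv_def] at this
  rw [hq]; exact this

lemma rt_pow_q (hq : q = p ^ e) (x : k) : rt p e (x ^ q) = x := by
  have : x ^ q = iterateFrobeniusEquiv k p e x := by
    rw [iterateFrobeniusEquiv_def, hq]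
  rw [this]
  exact (iterateFrobeniusEquiv k p e).symm_apply_apply x

lemma rt_ne_zero {x : k} (hx : x ≠ 0) : rt p e x ≠ 0 := by
  intro h
  apply hx
  have : rt p e x = rt p e 0 := by rw [h, map_zero]
  exact (rt p e).injective this

/-- The `p^{-e}`-linear "root extraction at offset `c`" map on power series. -/
noncomputable def phi (p e q : ℕ) [Fact p.Prime] [CharP k p] [PerfectRing k p]
    (c : Fin n →₀ ℕ) (f : MvPowerSeries (Fin n) k) : MvPowerSeries (Fin n) k :=
  mkS fun D => rt p e (MvPowerSeries.coeff (q • D + c) f)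

@[simp] lemma coeff_phi (c D : Fin n →₀ ℕ) (f : MvPowerSeries (Fin n) k) :
    MvPowerSeries.coeff D (phi p e q c f) = rt p e (MvPowerSeries.coeff (q • D + c) f) := rfl

lemma phi_add (c : Fin n →₀ ℕ) (f g : MvPowerSeries (Fin n) k) :
    phi p e q c (f + g) = phi p e q c f + phi p e q c g := by
  ext D
  simp [map_add]

lemma phi_zero (c : Fin n →₀ ℕ) : phi p e q c (0 : MvPowerSeries (Fin n) k) = 0 := by
  ext D; simp

/-- The key identity: `φ_c (a ⬝ g^q) = φ_c(a) ⬝ g`. -/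
lemma phi_mul_pow (hq : q = p ^ e) (c : Fin n →₀ ℕ) (hc : ∀ i, c i ≤ q - 1)
    (a g : MvPowerSeries (Fin n) k) :
    phi p e q c (a * g ^ q) = phi p e q c a * g := by
  classical
  have hq0 : 0 < q := hq ▸ pow_pos (Fact.out (p := p.Prime)).pos e
  ext D
  rw [coeff_phi, MvPowerSeries.coeff_mul (φ := phi p e q c a), MvPowerSeries.coeff_mul, map_sum]
  set T := (Finset.HasAntidiagonal.antidiagonal D).image
    (fun pr : (Fin n →₀ ℕ) × (Fin n →₀ ℕ) => (q • pr.1 + c, q • pr.2)) with hT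
  have hsub : T ⊆ Finset.HasAntidiagonal.antidiagonal (q • D + c) := by
    intro x hx
    rw [hT, Finset.mem_image] at hx
    obtain ⟨pr, hpr, rfl⟩ := hx
    rw [Finset.HasAntidiagonal.mem_antidiagonal] at hpr ⊢
    rw [← hpr]
    ext i
    simp only [Finsupp.add_apply, Finsupp.smul_apply, smul_eq_mul]
    ring
  have hzero : ∀ x ∈ Finset.HasAntidiagonal.antidiagonal (q • D + c), x ∉ T →
      rt p e (MvPowerSeries.coeff x.1 a * MvPowerSeries.coeff x.2 (g ^ q)) = 0 := by
    intro x hx hxT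
    by_cases hdvd : ∃ t, x.2 = q • t
    · exfalso
      obtain ⟨t, ht⟩ := hdvd
      rw [Finset.HasAntidiagonal.mem_antidiagonal] at hx
      have hcoord : ∀ i, x.1 i + q * t i = q * D i + c i := by
        intro i
        have := congrArg (fun v : Fin n →₀ ℕ => v i) hx
        simpa [Finsupp.add_apply, Finsupp.smul_apply, ht] using this
      have htD : ∀ i, t i ≤ D i := by
        intro i
        have h1 := hcoord i
        have h2 : c i ≤ q - 1 := hc i
        have h3 : q * t i ≤ q * D i + (q - 1) := by omega
        by_contra hcon
        push_neg at hcon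
        have h4 : q * (D i + 1) ≤ q * t i := Nat.mul_le_mul_left q hcon
        rw [Nat.mul_add, Nat.mul_one] at h4
        omega
      apply hxT
      rw [hT, Finset.mem_image]
      refine ⟨(D - t, t), ?_, ?_⟩
      · rw [Finset.HasAntidiagonal.mem_antidiagonal]
        exact tsub_add_cancel_of_le (Finsupp.le_def.mpr htD)
      · have hx1 : q • (D - t) + c = x.1 := by
          ext i
          have h1 := hcoord i
          have h2 := htD i
          simp only [Finsupp.add_apply, Finsupp.smul_apply, smul_eq_mul, Finsupp.tsub_apply]
          have h6 : q * (D i - t i) + q * t i = q * D i := by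
            rw [← Nat.mul_add]
            congr 1
            omega
          omega
        rw [hx1, ← ht]
    · rw [coeff_pow_q_of_not hq g x.2 hdvd, mul_zero, map_zero]
  rw [← Finset.sum_subset hsub hzero, hT, Finset.sum_image]
  · refine Finset.sum_congr rfl fun pr _ => ?_
    rw [coeff_pow_q_smul hq, map_mul, rt_pow_q hq, coeff_phi]
  · intro pr hpr pr' hpr' heq
    have h2 : pr.2 = pr'.2 := smul_exp_cancel hq0 (by
      have := congrArg Prod.snd heq; simpa using this)
    have h1 : pr.1 = pr'.1 := by
      have := congrArg Prod.fst heq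
      simp only at this
      exact smul_exp_cancel hq0 (add_right_cancel this)
    exact Prod.ext h1 h2

lemma phi_sum (c : Fin n →₀ ℕ) {ι : Type*} (s : Finset ι) (f : ι → MvPowerSeries (Fin n) k) :
    phi p e q c (∑ i ∈ s, f i) = ∑ i ∈ s, phi p e q c (f i) := by
  classical
  induction s using Finset.induction with
  | empty => simpa using phi_zero (p := p) (e := e) (q := q) c
  | insert _ _ hx ih =>
    rename_i a s
    rw [Finset.sum_insert hx, Finset.sum_insert hx, phi_add, ih]

lemma phi_frobeniusPower_mem (hq : q = p ^ e) (J : Ideal (MvPowerSeries (Fin n) k))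
    (c : Fin n →₀ ℕ) (hc : ∀ i, c i ≤ q - 1) {x : MvPowerSeries (Fin n) k}
    (hx : x ∈ frobeniusPower J q) : phi p e q c x ∈ J := by
  rw [frobeniusPower, Ideal.span] at hx
  obtain ⟨N, r, g, hsum⟩ := Submodule.mem_span_set'.mp hx
  have hmem : ∀ i : Fin N, ∃ y ∈ J, (y : MvPowerSeries (Fin n) k) ^ q = (g i : MvPowerSeries (Fin n) k) := by
    intro i
    obtain ⟨y, hy, hyq⟩ := (g i).2
    exact ⟨y, hy, hyq⟩
  choose y hyJ hyq using hmem
  have hx' : x = ∑ i, r i * (y i) ^ q := by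
    rw [← hsum]
    refine Finset.sum_congr rfl fun i _ => ?_
    rw [smul_eq_mul, hyq i]
  rw [hx', phi_sum]
  refine Ideal.sum_mem _ fun i _ => ?_
  rw [phi_mul_pow hq c hc]
  exact Ideal.mul_mem_left _ _ (hyJ i)

end Phi

section Main

variable {p e q : ℕ} [Fact p.Prime] [CharP k p] [PerfectRing k p]

lemma q_two (hq : q = p ^ e) (he : 1 ≤ e) : 2 ≤ q := by
  have hp2 : 2 ≤ p := (Fact.out (p := p.Prime)).two_le
  calc 2 = 2 ^ 1 := rfl
  _ ≤ p ^ 1 := Nat.pow_le_pow_left hp2 1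
  _ ≤ p ^ e := Nat.pow_le_pow_right (by omega) he
  _ = q := hq.symm

lemma z_as_monomial (hq : q = p ^ e) :
    ((∏ i : Fin n, (X i : MvPowerSeries (Fin n) k)) ^ (q - 1))
      = monomial (expF fun _ => q - 1) 1 := by
  rw [prod_X_eq_monomial, monomial_one_pow]
  have : (q - 1) • indF (Finset.univ : Finset (Fin n)) = (expF fun _ => q - 1) := by
    ext i
    simp [indF]
  rw [this]

lemma shrink (hq : q = p ^ e) {J : Ideal (MvPowerSeries (Fin n) k)}
    {z : MvPowerSeries (Fin n) k} (hz : z = monomial (expF fun _ => q - 1) 1)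
    (hcomp : ∀ f ∈ J, z * f ∈ frobeniusPower J q)
    {f : MvPowerSeries (Fin n) k} (hf : f ∈ J) {d : Fin n →₀ ℕ}
    (hd : MvPowerSeries.coeff d f ≠ 0) :
    ∃ f' ∈ J, MvPowerSeries.coeff (expF fun i => (d i + (q - 1)) / q) f' ≠ 0 := by
  have hq0 : 0 < q := hq ▸ pow_pos (Fact.out (p := p.Prime)).pos e
  set c : Fin n →₀ ℕ := expF fun i => (d i + (q - 1)) % q with hcdef
  have hc : ∀ i, c i ≤ q - 1 := by
    intro i
    have := Nat.mod_lt (d i + (q - 1)) hq0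
    simp only [hcdef, expF_apply]
    omega
  refine ⟨phi p e q c (z * f), phi_frobeniusPower_mem hq J c hc (hcomp f hf), ?_⟩
  rw [coeff_phi]
  have hkey : q • (expF fun i => (d i + (q - 1)) / q) + c = (expF fun _ => q - 1) + d := by
    ext i
    simp only [Finsupp.add_apply, Finsupp.smul_apply, smul_eq_mul, expF_apply, hcdef]
    have h1 := Nat.div_add_mod (d i + (q - 1)) q
    have h2 : q - 1 ≤ d i + (q - 1) := by omega
    omega
  rw [hkey, hz, MvPowerSeries.coeff_add_monomial_mul, one_mul]
  exact rt_ne_zero hd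

lemma descent (hq : q = p ^ e) (he : 1 ≤ e) {J : Ideal (MvPowerSeries (Fin n) k)}
    {z : MvPowerSeries (Fin n) k} (hz : z = monomial (expF fun _ => q - 1) 1)
    (hcomp : ∀ f ∈ J, z * f ∈ frobeniusPower J q) (Fj : Finset (Fin n)) :
    ∀ (N : ℕ) (d : Fin n →₀ ℕ), (∑ i, d i) ≤ N → (∀ i, i ∉ Fj → d i = 0) →
    ∀ f ∈ J, MvPowerSeries.coeff d f ≠ 0 →
    ∃ h ∈ J, ∃ d' : Fin n →₀ ℕ, (∀ i, d' i ≤ 1) ∧ (∀ i, i ∉ Fj → d' i = 0) ∧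
      MvPowerSeries.coeff d' h ≠ 0 := by
  have hq2 : 2 ≤ q := q_two hq he
  intro N
  induction N with
  | zero =>
    intro d hsum hd0 f hf hcoeff
    refine ⟨f, hf, d, ?_, hd0, hcoeff⟩
    intro i
    have : d i ≤ ∑ j, d j := Finset.single_le_sum (f := fun j => d j) (fun _ _ => Nat.zero_le _) (Finset.mem_univ i)
    omega
  | succ N ih =>
    intro d hsum hd0 f hf hcoeff
    by_cases hsmall : ∀ i, d i ≤ 1
    · exact ⟨f, hf, d, hsmall, hd0, hcoeff⟩
    · push_neg at hsmall
      obtain ⟨i₀, hi₀⟩ := hsmall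
      obtain ⟨f', hf', hcoeff'⟩ := shrink hq hz hcomp hf hcoeff
      set D : Fin n →₀ ℕ := expF fun i => (d i + (q - 1)) / q with hDdef
      have hDle : ∀ i, D i ≤ d i := by
        intro i
        simp only [hDdef, expF_apply]
        by_cases h0 : d i = 0
        · rw [h0]
          have hlt : 0 + (q - 1) < q := by omega
          rw [Nat.div_eq_of_lt hlt]
        · have : (d i + (q - 1)) / q < d i + 1 := by
            rw [Nat.div_lt_iff_lt_mul (by omega)]
            have h1 : d i * q ≥ d i := Nat.le_mul_of_pos_right _ (by omega)
            have h2 : (d i + 1) * q = d i * q + q := by ring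
            omega
          omega
      have hDlt : D i₀ < d i₀ := by
        simp only [hDdef, expF_apply]
        rw [Nat.div_lt_iff_lt_mul (by omega)]
        have e2 : 2 * (q - 1) ≤ d i₀ * (q - 1) := Nat.mul_le_mul_right _ (by omega)
        have e1 : d i₀ * q = d i₀ * (q - 1) + d i₀ := by
          have hqq : q - 1 + 1 = q := by omega
          calc d i₀ * q = d i₀ * ((q - 1) + 1) := by rw [hqq]
          _ = d i₀ * (q - 1) + d i₀ := by ring
        omega
      have hD0 : ∀ i, i ∉ Fj → D i = 0 := by
        intro i hi
        simp only [hDdef, expF_apply, hd0 i hi]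
        exact Nat.div_eq_of_lt (by omega)
      have hDsum : (∑ i, D i) ≤ N := by
        have h1 : ∑ i, D i < ∑ i, d i :=
          Finset.sum_lt_sum (fun i _ => hDle i) ⟨i₀, Finset.mem_univ i₀, hDlt⟩
        omega
      exact ih D hDsum hD0 f' hf' hcoeff'

lemma endgame (hq : q = p ^ e) (he : 1 ≤ e) {J : Ideal (MvPowerSeries (Fin n) k)}
    {z : MvPowerSeries (Fin n) k} (hz : z = monomial (expF fun _ => q - 1) 1)
    (hcomp : ∀ f ∈ J, z * f ∈ frobeniusPower J q) (Fj : Finset (Fin n))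
    {h : MvPowerSeries (Fin n) k} (hh : h ∈ J) {d' : Fin n →₀ ℕ}
    (hd1 : ∀ i, d' i ≤ 1) (hd0 : ∀ i, i ∉ Fj → d' i = 0)
    (hcf : MvPowerSeries.coeff d' h ≠ 0) :
    monomial (indF Fj) 1 ∈ J := by
  have hq2 : 2 ≤ q := q_two hq he
  set b : Fin n →₀ ℕ := expF fun i => if i ∈ Fj then 1 - d' i else 0 with hbdef
  set h₁ : MvPowerSeries (Fin n) k := monomial b 1 * h with hh1def
  have hh₁ : h₁ ∈ J := Ideal.mul_mem_left _ _ hh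
  have hb : b + d' = indF Fj := by
    ext i
    simp only [Finsupp.add_apply, hbdef, expF_apply, indF]
    by_cases hi : i ∈ Fj
    · simp only [hi, if_true]
      have := hd1 i
      omega
    · simp only [hi, if_false]
      rw [hd0 i hi]
  have hcf₁ : MvPowerSeries.coeff (indF Fj) h₁ ≠ 0 := by
    rw [hh1def, ← hb, MvPowerSeries.coeff_add_monomial_mul, one_mul]
    exact hcf
  set c : Fin n →₀ ℕ := expF fun i => if i ∈ Fj then 0 else q - 1 with hcdef
  have hc : ∀ i, c i ≤ q - 1 := by
    intro i
    simp only [hcdef, expF_apply]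
    split_ifs <;> omega
  set h₃ : MvPowerSeries (Fin n) k := phi p e q c (z * h₁) with hh3def
  have hh₃ : h₃ ∈ J := phi_frobeniusPower_mem hq J c hc (hcomp h₁ hh₁)
  have hα : MvPowerSeries.coeff (indF Fj) h₃ ≠ 0 := by
    rw [hh3def, coeff_phi]
    have hkey : q • indF Fj + c = (expF fun _ => q - 1) + indF Fj := by
      ext i
      simp only [Finsupp.add_apply, Finsupp.smul_apply, smul_eq_mul, expF_apply, hcdef, indF]
      by_cases hi : i ∈ Fj <;> simp [hi] <;> omega
    rw [hkey, hz, MvPowerSeries.coeff_add_monomial_mul, one_mul]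
    exact rt_ne_zero hcf₁
  have hβ : ∀ E : Fin n →₀ ℕ, ¬ indF Fj ≤ E → MvPowerSeries.coeff E h₃ = 0 := by
    intro E hE
    rw [Finsupp.le_def] at hE
    push_neg at hE
    obtain ⟨i, hi⟩ := hE
    have hiF : i ∈ Fj ∧ E i = 0 := by
      by_cases hmem : i ∈ Fj
      · simp only [indF, expF_apply, hmem, if_true] at hi
        exact ⟨hmem, by omega⟩
      · simp only [indF, expF_apply, hmem, if_false] at hi
        omega
    rw [hh3def, coeff_phi, hz, MvPowerSeries.coeff_monomial_mul, if_neg, map_zero]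
    rw [Finsupp.le_def]
    push_neg
    refine ⟨i, ?_⟩
    simp only [expF_apply, Finsupp.add_apply, Finsupp.smul_apply, smul_eq_mul, hcdef,
      hiF.1, if_true, hiF.2]
    omega
  set u : MvPowerSeries (Fin n) k := mkS fun E => MvPowerSeries.coeff (E + indF Fj) h₃ with hudef
  have hu : monomial (indF Fj) 1 * u = h₃ := by
    ext E
    rw [MvPowerSeries.coeff_monomial_mul]
    by_cases hle : indF Fj ≤ E
    · rw [if_pos hle, one_mul, hudef, coeff_mkS, tsub_add_cancel_of_le hle]
    · rw [if_neg hle, hβ E hle]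
  have hcc : MvPowerSeries.constantCoeff (σ := Fin n) (R := k) u ≠ 0 := by
    rw [← MvPowerSeries.coeff_zero_eq_constantCoeff, hudef, coeff_mkS, zero_add]
    exact hα
  have : monomial (indF Fj) 1 = h₃ * u⁻¹ := by
    rw [← hu, mul_assoc, MvPowerSeries.mul_inv_cancel u hcc, mul_one]
  rw [this]
  exact Ideal.mul_mem_right _ _ hh₃

end Main

section Main2

variable {p e q : ℕ} [Fact p.Prime] [CharP k p] [PerfectRing k p]

lemma facet_monomial_mem (hq : q = p ^ e) (he : 1 ≤ e) {J : Ideal (MvPowerSeries (Fin n) k)}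
    {z : MvPowerSeries (Fin n) k} (hz : z = monomial (expF fun _ => q - 1) 1)
    (hcomp : ∀ f ∈ J, z * f ∈ frobeniusPower J q) (Fj : Finset (Fin n))
    (hnot : ¬ J ≤ varIdeal k (Finset.univ \ Fj)) : monomial (indF Fj) 1 ∈ J := by
  obtain ⟨f, hfJ, hfnot⟩ := SetLike.not_le_iff_exists.mp hnot
  have hco : ¬ ∀ d : Fin n →₀ ℕ, MvPowerSeries.coeff d f ≠ 0 →
      ∃ i ∈ Finset.univ \ Fj, d i ≠ 0 :=
    fun h => hfnot (mem_varIdeal_of_forall h)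
  push_neg at hco
  obtain ⟨d, hd, hall⟩ := hco
  have hd0 : ∀ i, i ∉ Fj → d i = 0 := fun i hi =>
    hall i (Finset.mem_sdiff.mpr ⟨Finset.mem_univ i, hi⟩)
  obtain ⟨h, hhJ, d', hd1, hd0', hcf⟩ :=
    descent hq he hz hcomp Fj (∑ i, d i) d le_rfl hd0 f hfJ hd
  exact endgame hq he hz hcomp Fj hhJ hd1 hd0' hcf

lemma nonface_monomial_mem_inf {m : ℕ} (F : Fin m → Finset (Fin n)) (A : Finset (Fin n))
    (hA : ∀ j, ¬ A ⊆ F j) :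
    monomial (indF A) 1 ∈ ⨅ j, varIdeal k (Finset.univ \ F j) := by
  classical
  rw [Submodule.mem_iInf]
  intro j
  apply mem_varIdeal_of_forall
  intro d hd
  rw [MvPowerSeries.coeff_monomial] at hd
  have hdA : d = indF A := by
    by_contra hne
    rw [if_neg hne] at hd
    exact hd rfl
  obtain ⟨i, hiA, hiF⟩ := Finset.not_subset.mp (hA j)
  refine ⟨i, Finset.mem_sdiff.mpr ⟨Finset.mem_univ i, hiF⟩, ?_⟩
  simp [hdA, indF, hiA]

lemma z_mul_mem_of_mem_inf (hq : q = p ^ e) {m : ℕ} (F : Fin m → Finset (Fin n))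
    (J₀ : Ideal (MvPowerSeries (Fin n) k))
    (hsub : ∀ A : Finset (Fin n), (∀ j, ¬ A ⊆ F j) → monomial (indF A) 1 ∈ J₀)
    {f : MvPowerSeries (Fin n) k} (hf : f ∈ ⨅ j, varIdeal k (Finset.univ \ F j)) :
    (monomial (expF fun _ => q - 1) 1) * f ∈ frobeniusPower J₀ q := by
  classical
  set z : MvPowerSeries (Fin n) k := monomial (expF fun _ => q - 1) 1 with hzdef
  set h : MvPowerSeries (Fin n) k := z * f with hhdef
  set T : (Fin n →₀ ℕ) → Finset (Fin n) :=
    fun d => Finset.univ.filter (fun i => q ≤ d i) with hTdef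
  set g : Finset (Fin n) → MvPowerSeries (Fin n) k :=
    fun A => mkS fun d => if T d = A then MvPowerSeries.coeff d h else 0 with hgdef
  have hdecomp : h = ∑ A : Finset (Fin n), g A := by
    ext d
    rw [map_sum]
    have : ∀ A ∈ (Finset.univ : Finset (Finset (Fin n))),
        MvPowerSeries.coeff d (g A) = if T d = A then MvPowerSeries.coeff d h else 0 :=
      fun A _ => rfl
    rw [Finset.sum_congr rfl this, Finset.sum_ite_eq, if_pos (Finset.mem_univ _)]
  have hTd : ∀ d A, T d = A → q • indF A ≤ d := by
    intro d A hTA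
    rw [Finsupp.le_def]
    intro i
    simp only [Finsupp.smul_apply, smul_eq_mul, indF, expF_apply]
    by_cases hiA : i ∈ A
    · rw [if_pos hiA, mul_one]
      have : i ∈ T d := hTA ▸ hiA
      rw [hTdef] at this
      exact (Finset.mem_filter.mp this).2
    · rw [if_neg hiA, mul_zero]
      exact Nat.zero_le _
  have hgoal : h ∈ frobeniusPower J₀ q := by
    rw [hdecomp]
    refine Ideal.sum_mem _ fun A _ => ?_
    by_cases hface : ∃ j, A ⊆ F j
    · obtain ⟨j, hAj⟩ := hface
      have hzero : g A = 0 := by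
        ext d
        rw [map_zero, hgdef, coeff_mkS]
        by_cases hTA : T d = A
        · rw [if_pos hTA]
          rw [hhdef, hzdef, MvPowerSeries.coeff_monomial_mul]
          split_ifs with hle
          · rw [one_mul]
            by_contra hne
            have hmem : f ∈ varIdeal k (Finset.univ \ F j) := Submodule.mem_iInf _ |>.mp hf j
            obtain ⟨i, himem, hine⟩ := forall_of_mem_varIdeal hmem _ hne
            have hdi : q ≤ d i := by
              rw [Finsupp.tsub_apply] at hine
              simp only [expF_apply] at hine
              have := Finsupp.le_def.mp hle i
              simp only [expF_apply] at this
              omega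
            have hiA : i ∈ A := by
              rw [← hTA, hTdef]
              exact Finset.mem_filter.mpr ⟨Finset.mem_univ i, hdi⟩
            exact (Finset.mem_sdiff.mp himem).2 (hAj hiA)
          · rfl
        · rw [if_neg hTA]
      rw [hzero]
      exact zero_mem _
    · push_neg at hface
      have hxA : (monomial (indF A) 1) ^ q ∈ frobeniusPower J₀ q :=
        Ideal.subset_span ⟨_, hsub A hface, rfl⟩
      set u : MvPowerSeries (Fin n) k :=
        mkS fun d => MvPowerSeries.coeff (d + q • indF A) (g A) with hudef
      have hgA : g A = (monomial (indF A) 1) ^ q * u := by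
        rw [monomial_one_pow]
        ext d
        rw [MvPowerSeries.coeff_monomial_mul]
        by_cases hle : q • indF A ≤ d
        · rw [if_pos hle, one_mul, hudef]
          simp only [coeff_mkS]
          rw [tsub_add_cancel_of_le hle]
        · rw [if_neg hle, hgdef]
          simp only [coeff_mkS]
          rw [if_neg]
          intro hTA
          exact hle (hTd d A hTA)
      rw [hgA]
      exact Ideal.mul_mem_right _ _ hxA
  exact hgoal

lemma z_mul_facet_mem (hq : q = p ^ e) (B : Finset (Fin n))
    (J₀ : Ideal (MvPowerSeries (Fin n) k)) (hxF : monomial (indF B) 1 ∈ J₀) :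
    (monomial (expF fun _ => q - 1) 1) * monomial (indF B) 1 ∈ frobeniusPower J₀ q := by
  have hq1 : 1 ≤ q := hq ▸ Nat.one_le_iff_ne_zero.mpr (pow_ne_zero e (Fact.out (p := p.Prime)).pos.ne')
  rw [monomial_mul_monomial, one_mul]
  set w : Fin n →₀ ℕ := expF fun i => if i ∈ B then 0 else q - 1 with hwdef
  have hkey : (expF fun _ => q - 1) + indF B = w + q • indF B := by
    ext i
    simp only [Finsupp.add_apply, Finsupp.smul_apply, smul_eq_mul, expF_apply, indF, hwdef]
    by_cases hi : i ∈ B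
    · simp only [hi, if_true]
      omega
    · simp only [hi, if_false]
      omega
  rw [hkey, ← one_mul (1 : k), ← monomial_mul_monomial, ← monomial_one_pow]
  exact Ideal.mul_mem_left _ _ (Ideal.subset_span ⟨_, hxF, rfl⟩)

end Main2

end SR


open SR in
/-- For the Stanley–Reisner ideal `I = ⋂ⱼ P_{Fⱼᶜ}` of a simplicial complex
with facets `F₁, …, F_m`, the ideal `J₀ = I + (x_{F₁}, …, x_{F_m})` is the smallest ideal of
`S` that is compatible with `z = (x₁⋯xₙ)^{q−1}`, contains `I` and is not contained in any
minimal prime `P_{Fⱼᶜ}` of `I`; consequently, the test ideal `τ(R,φ)` of `R = S/I` is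
generated by the images of the facet monomials. -/
theorem stanley_reisner_smallest_compatible_ideal {k : Type*} [Field k] (p : ℕ)
    [Fact p.Prime] [CharP k p] [PerfectRing k p] (n : ℕ) (e q : ℕ) (he : 1 ≤ e)
    (hq : q = p ^ e) (m : ℕ) (hm : 1 ≤ m)
    (F : Fin m → Finset (Fin n)) (hFne : ∀ j, (F j).Nonempty)
    (hFincomp : ∀ i j, i ≠ j → ¬ F i ⊆ F j)
    (z : MvPowerSeries (Fin n) k)
    (hz : z = (∏ i : Fin n, (MvPowerSeries.X i : MvPowerSeries (Fin n) k)) ^ (q - 1))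
    (I : Ideal (MvPowerSeries (Fin n) k))
    (hI : I = ⨅ j, varIdeal k (Finset.univ \ F j))
    (J₀ : Ideal (MvPowerSeries (Fin n) k))
    (hJ₀ : J₀ = I ⊔ Ideal.span (Set.range fun j =>
      ∏ i ∈ F j, (MvPowerSeries.X i : MvPowerSeries (Fin n) k))) :
    (∀ f ∈ J₀, z * f ∈ frobeniusPower J₀ q) ∧
      (∀ j, ¬ J₀ ≤ varIdeal k (Finset.univ \ F j)) ∧
      (∀ J : Ideal (MvPowerSeries (Fin n) k), I ≤ J →
        (∀ f ∈ J, z * f ∈ frobeniusPower J q) →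
        (∀ j, ¬ J ≤ varIdeal k (Finset.univ \ F j)) → J₀ ≤ J) ∧
      Ideal.map (Ideal.Quotient.mk I) J₀ =
        Ideal.span (Set.range fun j => Ideal.Quotient.mk I
          (∏ i ∈ F j, (MvPowerSeries.X i : MvPowerSeries (Fin n) k))) := by
  classical
  have hzm : z = MvPowerSeries.monomial (expF fun _ => q - 1) 1 := by
    rw [hz, z_as_monomial hq]
  have hprod : ∀ j, (∏ i ∈ F j, (MvPowerSeries.X i : MvPowerSeries (Fin n) k))
      = MvPowerSeries.monomial (indF (F j)) 1 := fun j => prod_X_eq_monomial (F j)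
  have hxFJ₀ : ∀ j, MvPowerSeries.monomial (indF (F j)) 1 ∈ J₀ := by
    intro j
    have : (∏ i ∈ F j, (MvPowerSeries.X i : MvPowerSeries (Fin n) k)) ∈ J₀ := by
      rw [hJ₀]
      exact Submodule.mem_sup_right (Ideal.subset_span ⟨j, rfl⟩)
    rwa [hprod j] at this
  have hsub : ∀ A : Finset (Fin n), (∀ j, ¬ A ⊆ F j) →
      MvPowerSeries.monomial (indF A) 1 ∈ J₀ := by
    intro A hA
    rw [hJ₀]
    exact Submodule.mem_sup_left (hI ▸ nonface_monomial_mem_inf F A hA)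
  refine ⟨?_, ?_, ?_, ?_⟩
  · -- (1) compatibility
    set K : Ideal (MvPowerSeries (Fin n) k) :=
      { carrier := {f | z * f ∈ frobeniusPower J₀ q}
        add_mem' := fun {a b} ha hb => by
          simp only [Set.mem_setOf_eq] at *
          rw [mul_add]
          exact Ideal.add_mem _ ha hb
        zero_mem' := by
          simp only [Set.mem_setOf_eq, mul_zero]
          exact zero_mem _
        smul_mem' := fun c x hx => by
          simp only [Set.mem_setOf_eq, smul_eq_mul] at *
          rw [show z * (c * x) = c * (z * x) by ring]
          exact Ideal.mul_mem_left _ _ hx } with hKdef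
    have hle : J₀ ≤ K := by
      rw [hJ₀]
      apply sup_le
      · intro a ha
        show z * a ∈ frobeniusPower J₀ q
        rw [hzm]
        exact z_mul_mem_of_mem_inf hq F J₀ hsub (hI ▸ ha)
      · rw [Ideal.span_le]
        rintro x ⟨j, rfl⟩
        show z * (∏ i ∈ F j, (MvPowerSeries.X i : MvPowerSeries (Fin n) k))
          ∈ frobeniusPower J₀ q
        rw [hprod j, hzm]
        exact z_mul_facet_mem hq (F j) J₀ (hxFJ₀ j)
    exact fun f hf => hle hf
  · -- (2) not contained in minimal primes
    intro j hle
    have hmem : MvPowerSeries.monomial (indF (F j)) 1 ∈ varIdeal k (Finset.univ \ F j) :=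
      hle (hxFJ₀ j)
    obtain ⟨i, hiin, hine⟩ := forall_of_mem_varIdeal hmem (indF (F j)) (by
      rw [MvPowerSeries.coeff_monomial_same]
      exact one_ne_zero)
    have hnotin : i ∉ F j := (Finset.mem_sdiff.mp hiin).2
    simp [indF, hnotin] at hine
  · -- (3) minimality
    intro J hIJ hcomp hnot
    rw [hJ₀]
    apply sup_le hIJ
    rw [Ideal.span_le]
    rintro x ⟨j, rfl⟩
    show (∏ i ∈ F j, (MvPowerSeries.X i : MvPowerSeries (Fin n) k)) ∈ J
    rw [hprod j]
    exact facet_monomial_mem hq he hzm hcomp (F j) (hnot j)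
  · -- (4) image in the quotient
    rw [hJ₀, Ideal.map_sup, Ideal.map_quotient_self, bot_sup_eq, Ideal.map_span]
    congr 1
    rw [← Set.range_comp]
    rfl
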